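/- Let r ≥ 2 be an integer and let K₁ : ℝ → ℝ be integrable with ∫ tʲ K₁(t) dt = 0 for every integer j with 1 ≤ j ≤ r − 1, and ∫ |t|^r |K₁(t)| dt < ∞. Let f : ℝ → ℝ be (r−1)-times differentiable with f^{(r-1)} bounded and continuous. Then for every b ∈ ℝ, h^{1-r} ∫ t K₁(t) f(h t + b) dt converges, as h → 0⁺, to (f^{(r-1)}(b) / (r−1)!) ∫ t^r K₁(t) dt. -/

import Mathlib

open MeasureTheory Filter

/-- Derivative of a truncated exponential-type polynomial sum. -/
lemma hasDerivAt_taylor_sum (a : ℕ → ℝ) (m : ℕ) (u : ℝ) :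
    HasDerivAt (fun u : ℝ => ∑ j ∈ Finset.range (m + 1), a j * u ^ j / j.factorial)
      (∑ j ∈ Finset.range m, a (j + 1) * u ^ j / j.factorial) u := by
  have h : HasDerivAt (fun u : ℝ => ∑ j ∈ Finset.range (m + 1), a j * u ^ j / j.factorial)
      (∑ j ∈ Finset.range (m + 1), a j * ((j : ℝ) * u ^ (j - 1)) / j.factorial) u := by
    apply HasDerivAt.fun_sum
    intro j _
    exact ((hasDerivAt_pow j u).const_mul (a j)).div_const _
  convert h using 1
  rw [Finset.sum_range_succ']
  simp only [Nat.cast_zero, zero_mul, mul_zero, zero_div, add_zero]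
  refine Finset.sum_congr rfl fun j _ => ?_
  rw [Nat.add_sub_cancel, Nat.factorial_succ]
  have h1 : ((j : ℝ) + 1) ≠ 0 := by positivity
  have h2 : (j.factorial : ℝ) ≠ 0 := Nat.cast_ne_zero.2 j.factorial_ne_zero
  push_cast
  field_simp

lemma mem_uIoc_abs {b x t : ℝ} (ht : t ∈ Set.uIoc b x) : |t - b| ≤ |x - b| := by
  rcases le_total b x with h | h
  · rw [Set.uIoc_of_le h] at ht
    rw [abs_of_nonneg (by linarith [ht.1]), abs_of_nonneg (by linarith)]
    linarith [ht.2]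
  · rw [Set.uIoc_of_ge h] at ht
    rw [abs_of_nonpos (by linarith [ht.2]), abs_of_nonpos (by linarith)]
    linarith [ht.1]

/-- Two-sided Taylor remainder bound. -/
lemma taylor_bound : ∀ (n : ℕ) (f : ℝ → ℝ) (b C δ : ℝ),
    (∀ i < n, Differentiable ℝ (iteratedDeriv i f)) →
    Continuous (iteratedDeriv n f) →
    (∀ s, |s - b| ≤ δ → |iteratedDeriv n f s - iteratedDeriv n f b| ≤ C) →
    ∀ x, |x - b| ≤ δ →
      |f x - ∑ j ∈ Finset.range (n + 1), iteratedDeriv j f b * (x - b) ^ j / j.factorial|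
        ≤ C * |x - b| ^ n := by
  intro n
  induction n with
  | zero =>
      intro f b C δ _ _ hb x hx
      simpa [iteratedDeriv_zero] using hb x hx
  | succ n IH =>
      intro f b C δ hd hcont hb x hx
      have hδ0 : 0 ≤ δ := le_trans (abs_nonneg _) hx
      have hC : 0 ≤ C := by
        have := hb b (by simpa using hδ0)
        simpa using this
      have hf : Differentiable ℝ f := by simpa [iteratedDeriv_zero] using hd 0 (by omega)
      have hRderiv : ∀ y : ℝ, HasDerivAt
          (fun y : ℝ => f y - ∑ j ∈ Finset.range (n + 1 + 1),
            iteratedDeriv j f b * (y - b) ^ j / j.factorial)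
          (deriv f y - ∑ j ∈ Finset.range (n + 1),
            iteratedDeriv (j + 1) f b * (y - b) ^ j / j.factorial) y := by
        intro y
        have h2 := (hasDerivAt_taylor_sum (fun j => iteratedDeriv j f b) (n + 1) (y - b)).comp y
          ((hasDerivAt_id y).sub_const b)
        simpa [Function.comp, mul_one] using (hf y).hasDerivAt.fun_sub h2
      have hdf_cont : Continuous (deriv f) := by
        rcases Nat.eq_zero_or_pos n with rfl | hn
        · simpa [iteratedDeriv_one] using hcont
        · have := hd 1 (by omega)
          simpa [iteratedDeriv_one] using this.continuous
      have hR'c : Continuous (fun y : ℝ => deriv f y - ∑ j ∈ Finset.range (n + 1),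
          iteratedDeriv (j + 1) f b * (y - b) ^ j / j.factorial) := by
        apply hdf_cont.sub
        apply continuous_finset_sum
        intro j _
        fun_prop
      have hIH : ∀ y, |y - b| ≤ δ → |deriv f y - ∑ j ∈ Finset.range (n + 1),
          iteratedDeriv (j + 1) f b * (y - b) ^ j / j.factorial| ≤ C * |y - b| ^ n := by
        intro y hy
        have h1 := IH (deriv f) b C δ
          (fun i hi => by rw [← iteratedDeriv_succ']; exact hd (i + 1) (by omega))
          (by rw [← iteratedDeriv_succ']; exact hcont)
          (fun s hs => by
            rw [← iteratedDeriv_succ']; exact hb s hs)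
          y hy
        simpa [← iteratedDeriv_succ'] using h1
      have hFTC : (∫ y in b..x, (deriv f y - ∑ j ∈ Finset.range (n + 1),
            iteratedDeriv (j + 1) f b * (y - b) ^ j / j.factorial))
          = (f x - ∑ j ∈ Finset.range (n + 1 + 1),
              iteratedDeriv j f b * (x - b) ^ j / j.factorial)
            - (f b - ∑ j ∈ Finset.range (n + 1 + 1),
              iteratedDeriv j f b * (b - b) ^ j / j.factorial) :=
        intervalIntegral.integral_eq_sub_of_hasDerivAt (fun y _ => hRderiv y)
          (hR'c.intervalIntegrable _ _)
      have hRb : (f b - ∑ j ∈ Finset.range (n + 1 + 1),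
          iteratedDeriv j f b * (b - b) ^ j / j.factorial) = 0 := by
        rw [Finset.sum_range_succ']
        simp [iteratedDeriv_zero]
      have hbound : ‖∫ y in b..x, (deriv f y - ∑ j ∈ Finset.range (n + 1),
            iteratedDeriv (j + 1) f b * (y - b) ^ j / j.factorial)‖
          ≤ (C * |x - b| ^ n) * |x - b| := by
        apply intervalIntegral.norm_integral_le_of_norm_le_const
        intro y hy
        have h1 : |y - b| ≤ |x - b| := mem_uIoc_abs hy
        have h2 := hIH y (h1.trans hx)
        calc ‖deriv f y - ∑ j ∈ Finset.range (n + 1),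
              iteratedDeriv (j + 1) f b * (y - b) ^ j / j.factorial‖
            = |deriv f y - ∑ j ∈ Finset.range (n + 1),
              iteratedDeriv (j + 1) f b * (y - b) ^ j / j.factorial| := Real.norm_eq_abs _
          _ ≤ C * |y - b| ^ n := h2
          _ ≤ C * |x - b| ^ n := by gcongr
      rw [hFTC, hRb, sub_zero] at hbound
      calc |f x - ∑ j ∈ Finset.range (n + 1 + 1),
            iteratedDeriv j f b * (x - b) ^ j / j.factorial|
          ≤ (C * |x - b| ^ n) * |x - b| := hbound
        _ = C * |x - b| ^ (n + 1) := by rw [pow_succ, mul_assoc]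

/-- Exact kernel bias for the density term: if `K₁` has vanishing moments of orders
`1, …, r − 1` and a finite absolute `r`-th moment, and `f` is `(r−1)`-times
differentiable with bounded continuous `(r−1)`-th derivative, then as `h → 0⁺`,
`h^{1−r} ∫ t K₁(t) f(ht + b) dt → (f^{(r−1)}(b) / (r−1)!) ∫ t^r K₁(t) dt`. -/
theorem kernel_density_bias_limit
    (r : ℕ) (hr : 2 ≤ r) (K₁ : ℝ → ℝ) (hK₁ : Integrable K₁)
    (hmom : ∀ j : ℕ, 1 ≤ j → j ≤ r - 1 → ∫ t, t ^ j * K₁ t = 0)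
    (hKr : Integrable (fun t => |t| ^ r * |K₁ t|))
    (f : ℝ → ℝ) (M : ℝ)
    (hdiff : ∀ i < r - 1, Differentiable ℝ (iteratedDeriv i f))
    (hM : ∀ x, |iteratedDeriv (r - 1) f x| ≤ M)
    (hcont : Continuous (iteratedDeriv (r - 1) f)) :
    ∀ b : ℝ,
      Tendsto (fun h : ℝ => (h ^ (r - 1))⁻¹ * ∫ t, t * K₁ t * f (h * t + b))
        (nhdsWithin 0 (Set.Ioi 0))
        (nhds ((iteratedDeriv (r - 1) f b / (r - 1).factorial) * ∫ t, t ^ r * K₁ t)) := by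
  intro b
  obtain ⟨n, rfl⟩ : ∃ n, r = n + 1 := ⟨r - 1, by omega⟩
  simp only [Nat.add_sub_cancel] at hmom hdiff hM hcont ⊢
  have hn1 : 1 ≤ n := by omega
  have hfdiff : Differentiable ℝ f := by simpa [iteratedDeriv_zero] using hdiff 0 (by omega)
  have hfc : Continuous f := hfdiff.continuous
  have hM0 : 0 ≤ M := le_trans (abs_nonneg _) (hM b)
  set T : ℝ → ℝ := fun x => ∑ j ∈ Finset.range (n + 1),
    iteratedDeriv j f b * (x - b) ^ j / j.factorial with hTdef
  have hTc : Continuous T := by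
    apply continuous_finset_sum
    intro j _
    fun_prop
  -- global Taylor bound
  have key : ∀ x : ℝ, |f x - T x| ≤ 2 * M * |x - b| ^ n := by
    intro x
    refine taylor_bound n f b (2 * M) (|x - b|) hdiff hcont (fun s _ => ?_) x le_rfl
    calc |iteratedDeriv n f s - iteratedDeriv n f b|
        ≤ |iteratedDeriv n f s| + |iteratedDeriv n f b| := abs_sub _ _
      _ ≤ M + M := add_le_add (hM s) (hM b)
      _ = 2 * M := by ring
  -- epsilon Taylor bound
  have keyε : ∀ ε > (0:ℝ), ∃ δ > (0:ℝ), ∀ x, |x - b| ≤ δ → |f x - T x| ≤ ε * |x - b| ^ n := by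
    intro ε hε
    obtain ⟨δ, hδ, hδ'⟩ := Metric.continuousAt_iff.mp (hcont.continuousAt (x := b)) ε hε
    refine ⟨δ / 2, by linarith, ?_⟩
    intro x hx
    refine taylor_bound n f b ε (δ / 2) hdiff hcont (fun s hs => ?_) x hx
    have h1 : dist s b < δ := by rw [Real.dist_eq]; linarith
    have := hδ' h1
    rw [Real.dist_eq] at this
    exact this.le
  -- integrability of monomial moments
  have hpow : ∀ m : ℕ, m ≤ n + 1 → Integrable (fun t : ℝ => t ^ m * K₁ t) := by
    intro m hm
    have hmeas : AEStronglyMeasurable (fun t : ℝ => t ^ m * K₁ t) volume :=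
      (continuous_pow m).aestronglyMeasurable.mul hK₁.aestronglyMeasurable
    refine (hK₁.abs.add hKr).mono' hmeas ?_
    filter_upwards with t
    have h1 : |t| ^ m ≤ 1 + |t| ^ (n + 1) := by
      rcases le_total (|t|) 1 with h | h
      · have h2 : |t| ^ m ≤ 1 := pow_le_one₀ (abs_nonneg t) h
        have h3 : (0:ℝ) ≤ |t| ^ (n + 1) := pow_nonneg (abs_nonneg t) _
        linarith
      · have h2 : |t| ^ m ≤ |t| ^ (n + 1) := pow_le_pow_right₀ h hm
        linarith
    calc ‖t ^ m * K₁ t‖ = |t| ^ m * |K₁ t| := by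
          rw [Real.norm_eq_abs, abs_mul, abs_pow]
      _ ≤ (1 + |t| ^ (n + 1)) * |K₁ t| := by
          exact mul_le_mul_of_nonneg_right h1 (abs_nonneg _)
      _ = |K₁ t| + |t| ^ (n + 1) * |K₁ t| := by ring
  -- the remainder integrand
  set E : ℝ → ℝ → ℝ := fun h t => t * K₁ t * (f (h * t + b) - T (h * t + b)) with hEdef
  have hEmeas : ∀ h : ℝ, AEStronglyMeasurable (E h) volume := by
    intro h
    exact (continuous_id.aestronglyMeasurable.mul hK₁.aestronglyMeasurable).mul
      (((hfc.comp (by fun_prop)).sub (hTc.comp (by fun_prop))).aestronglyMeasurable)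
  have hEbound : ∀ h : ℝ, 0 < h → ∀ t : ℝ,
      ‖E h t‖ ≤ (2 * M * h ^ n) * (|t| ^ (n + 1) * |K₁ t|) := by
    intro h hh t
    have h1 : |h * t + b - b| = h * |t| := by
      rw [add_sub_cancel_right, abs_mul, abs_of_pos hh]
    calc ‖E h t‖ = |t| * |K₁ t| * |f (h * t + b) - T (h * t + b)| := by
          rw [Real.norm_eq_abs, hEdef]; simp [abs_mul]
      _ ≤ |t| * |K₁ t| * (2 * M * |h * t + b - b| ^ n) := by
          refine mul_le_mul_of_nonneg_left (key _) (by positivity)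
      _ = (2 * M * h ^ n) * (|t| ^ (n + 1) * |K₁ t|) := by
          rw [h1, mul_pow]; ring
  have hEint : ∀ h : ℝ, 0 < h → Integrable (E h) := by
    intro h hh
    exact (hKr.const_mul (2 * M * h ^ n)).mono' (hEmeas h)
      (Filter.Eventually.of_forall (hEbound h hh))
  -- splitting the integral
  have hsplit : ∀ h : ℝ, 0 < h → (∫ t, t * K₁ t * f (h * t + b))
      = (∫ t, E h t) + (iteratedDeriv n f b / n.factorial * h ^ n) * ∫ t, t ^ (n + 1) * K₁ t := by
    intro h hh
    have hfun : (fun t : ℝ => t * K₁ t * f (h * t + b)) = fun t =>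
        E h t + ∑ j ∈ Finset.range (n + 1),
          (iteratedDeriv j f b / j.factorial * h ^ j) * (t ^ (j + 1) * K₁ t) := by
      funext t
      have hBS : t * K₁ t * T (h * t + b) = ∑ j ∈ Finset.range (n + 1),
          (iteratedDeriv j f b / j.factorial * h ^ j) * (t ^ (j + 1) * K₁ t) := by
        rw [hTdef]
        simp only [add_sub_cancel_right, Finset.mul_sum]
        exact Finset.sum_congr rfl fun j _ => by ring
      rw [← hBS, hEdef]
      ring
    rw [hfun]
    rw [integral_add (hEint h hh)
      (integrable_finset_sum _ fun j hj => ((hpow (j + 1) (by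
        simp only [Finset.mem_range] at hj; omega)).const_mul _))]
    rw [integral_finset_sum _ fun j hj => ((hpow (j + 1) (by
        simp only [Finset.mem_range] at hj; omega)).const_mul _)]
    congr 1
    rw [Finset.sum_range_succ]
    have hz : ∀ j ∈ Finset.range n,
        (∫ t, (iteratedDeriv j f b / j.factorial * h ^ j) * (t ^ (j + 1) * K₁ t)) = 0 := by
      intro j hj
      simp only [Finset.mem_range] at hj
      rw [integral_const_mul, hmom (j + 1) (by omega) (by omega), mul_zero]
    rw [Finset.sum_eq_zero hz, zero_add, integral_const_mul]
  -- dominated convergence for the remainder term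
  have hDCT : Tendsto (fun h : ℝ => ∫ t, (h ^ n)⁻¹ * E h t)
      (nhdsWithin 0 (Set.Ioi 0)) (nhds 0) := by
    have hDCT' : Tendsto (fun h : ℝ => ∫ t, (h ^ n)⁻¹ * E h t)
        (nhdsWithin 0 (Set.Ioi 0)) (nhds (∫ _ : ℝ, (0 : ℝ))) := ?_
    · simpa using hDCT'
    refine tendsto_integral_filter_of_dominated_convergence
      (fun t => (2 * M) * (|t| ^ (n + 1) * |K₁ t|))
      (Filter.Eventually.of_forall fun h => (hEmeas h).const_mul _)
      ?_ (hKr.const_mul _) ?_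
    · refine Filter.eventually_of_mem self_mem_nhdsWithin fun h hh => ?_
      have hpos : (0:ℝ) < h := hh
      have hne : h ^ n ≠ 0 := pow_ne_zero _ hpos.ne'
      refine Filter.Eventually.of_forall fun t => ?_
      calc ‖(h ^ n)⁻¹ * E h t‖ = (h ^ n)⁻¹ * ‖E h t‖ := by
            rw [norm_mul, Real.norm_eq_abs, abs_of_pos (by positivity)]
        _ ≤ (h ^ n)⁻¹ * ((2 * M * h ^ n) * (|t| ^ (n + 1) * |K₁ t|)) := by
            exact mul_le_mul_of_nonneg_left (hEbound h hpos t) (by positivity)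
        _ = (2 * M) * (|t| ^ (n + 1) * |K₁ t|) := by field_simp
    · refine Filter.Eventually.of_forall fun t => ?_
      rcases eq_or_ne t 0 with rfl | ht
      · have : (fun h : ℝ => (h ^ n)⁻¹ * E h 0) = fun _ => 0 := by
          funext h; rw [hEdef]; simp
        rw [this]; exact tendsto_const_nhds
      · rw [Metric.tendsto_nhdsWithin_nhds]
        intro ε hε
        have hCt : (0:ℝ) < |t| ^ (n + 1) * |K₁ t| + 1 := by positivity
        obtain ⟨δ, hδ, hδ'⟩ := keyε (ε / (|t| ^ (n + 1) * |K₁ t| + 1)) (by positivity)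
        refine ⟨δ / (|t| + 1), by positivity, ?_⟩
        intro h hh hdist
        have hpos : (0:ℝ) < h := hh
        rw [Real.dist_eq, sub_zero, abs_of_pos hpos] at hdist
        have hht : |h * t + b - b| ≤ δ := by
          rw [add_sub_cancel_right, abs_mul, abs_of_pos hpos]
          have h1 : h * |t| ≤ h * (|t| + 1) := by nlinarith [abs_nonneg t]
          have h2 : h * (|t| + 1) < δ := by
            calc h * (|t| + 1) < (δ / (|t| + 1)) * (|t| + 1) :=
                  mul_lt_mul_of_pos_right hdist (by positivity)
              _ = δ := by field_simp
          linarith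
        have hkey := hδ' (h * t + b) hht
        have habs : |h * t + b - b| = h * |t| := by
          rw [add_sub_cancel_right, abs_mul, abs_of_pos hpos]
        rw [habs] at hkey
        rw [Real.dist_eq, sub_zero]
        have hne : h ^ n ≠ 0 := pow_ne_zero _ hpos.ne'
        calc |(h ^ n)⁻¹ * E h t|
            = (h ^ n)⁻¹ * (|t| * |K₁ t| * |f (h * t + b) - T (h * t + b)|) := by
              rw [abs_mul, abs_of_pos (by positivity : (0:ℝ) < (h ^ n)⁻¹), hEdef]
              simp [abs_mul]
          _ ≤ (h ^ n)⁻¹ * (|t| * |K₁ t| *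
                ((ε / (|t| ^ (n + 1) * |K₁ t| + 1)) * (h * |t|) ^ n)) := by
              refine mul_le_mul_of_nonneg_left
                (mul_le_mul_of_nonneg_left hkey (by positivity)) (by positivity)
          _ = (ε / (|t| ^ (n + 1) * |K₁ t| + 1)) * (|t| ^ (n + 1) * |K₁ t|) := by
              rw [mul_pow]; field_simp; ring
          _ < (ε / (|t| ^ (n + 1) * |K₁ t| + 1)) * (|t| ^ (n + 1) * |K₁ t| + 1) := by
              refine mul_lt_mul_of_pos_left (by linarith) (by positivity)
          _ = ε := by field_simp
  -- final assembly
  have hfinal : ∀ h ∈ Set.Ioi (0:ℝ),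
      (h ^ n)⁻¹ * ∫ t, t * K₁ t * f (h * t + b)
        = (∫ t, (h ^ n)⁻¹ * E h t)
          + (iteratedDeriv n f b / n.factorial) * ∫ t, t ^ (n + 1) * K₁ t := by
    intro h hh
    have hpos : (0:ℝ) < h := hh
    have hne : h ^ n ≠ 0 := pow_ne_zero _ hpos.ne'
    rw [integral_const_mul, hsplit h hpos]
    field_simp
  have hlim := hDCT.add (tendsto_const_nhds
    (x := (iteratedDeriv n f b / n.factorial) * ∫ t, t ^ (n + 1) * K₁ t)
    (f := nhdsWithin (0:ℝ) (Set.Ioi 0)))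
  rw [zero_add] at hlim
  refine Tendsto.congr' ?_ hlim
  exact Filter.eventually_of_mem self_mem_nhdsWithin fun h hh => (hfinal h hh).symm
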